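/- Let F(x) ∈ 𝓞[x] be a monic irreducible polynomial with root θ ∈ K̄, of depth r, with Okutsu frame [F_1, …, F_r] and associated invariants m_i, μ_i. Fix an index 1 ≤ i ≤ r+1, let α ∈ K̄ be an algebraic integer satisfying deg_K α = m_i and v(θ − α) > μ_{i−1}, and let G(x) be the minimal polynomial of α over K. Then [F_1, …, F_{i−1}] is an Okutsu frame of G(x). -/

import Mathlib

open Polynomial

noncomputable section

/-- A local field `K` of characteristic zero, presented through the canonical extension `v`
of its normalized discrete valuation (additively written, `v(K*) = ℤ`) to a fixed algebraic
closure of `K`.  The axioms state that `v` is an additive valuation on the algebraic closure,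
that its restriction to `K` is a surjective discrete valuation onto `ℤ` (plus `⊤` at `0`),
that it is invariant under `K`-automorphisms (a property of the canonical extension), that
`K` is complete and that its residue field is finite. -/
structure OkutsuSetup (K : Type) [Field K] [CharZero K] : Type where
  v : AlgebraicClosure K → WithTop ℚ
  v_eq_top_iff : ∀ x, v x = ⊤ ↔ x = 0
  v_mul : ∀ x y, v (x * y) = v x + v y
  v_min_le_add : ∀ x y, min (v x) (v y) ≤ v (x + y)
  v_neg : ∀ x, v (-x) = v x
  v_one : v 1 = 0
  v_base_int : ∀ x : K, x ≠ 0 →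
    ∃ k : ℤ, v (algebraMap K (AlgebraicClosure K) x) = ((k : ℚ) : WithTop ℚ)
  v_base_one : ∃ x : K, v (algebraMap K (AlgebraicClosure K) x) = ((1 : ℚ) : WithTop ℚ)
  v_aut_invariant : ∀ (M : IntermediateField K (AlgebraicClosure K)) (σ : ↥M ≃ₐ[K] ↥M)
    (x : ↥M), v ((σ x : ↥M) : AlgebraicClosure K) = v ((x : ↥M) : AlgebraicClosure K)
  complete : ∀ a : ℕ → K,
    (∀ N : ℚ, ∃ M : ℕ, ∀ p q : ℕ, M ≤ p → M ≤ q →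
      ((N : ℚ) : WithTop ℚ) < v (algebraMap K (AlgebraicClosure K) (a p - a q))) →
    ∃ b : K, ∀ N : ℚ, ∃ M : ℕ, ∀ p : ℕ, M ≤ p →
      ((N : ℚ) : WithTop ℚ) < v (algebraMap K (AlgebraicClosure K) (a p - b))
  finite_residue : ∃ T : Finset K, ∀ x : K,
    0 ≤ v (algebraMap K (AlgebraicClosure K) x) →
    ∃ y ∈ T, 0 < v (algebraMap K (AlgebraicClosure K) (x - y))

namespace OkutsuSetup

variable {K : Type} [Field K] [CharZero K]

/-- The valuation of `K` itself. -/
def vK (S : OkutsuSetup K) (x : K) : WithTop ℚ :=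
  S.v (algebraMap K (AlgebraicClosure K) x)

/-- The ring of integers `𝓞` of `K`. -/
def integers (S : OkutsuSetup K) : Subring K where
  carrier := {x : K | 0 ≤ S.vK x}
  zero_mem' := by
    show (0 : WithTop ℚ) ≤ S.vK 0
    unfold vK
    rw [map_zero, (S.v_eq_top_iff 0).mpr rfl]
    exact le_top
  one_mem' := by
    show (0 : WithTop ℚ) ≤ S.vK 1
    unfold vK
    rw [map_one, S.v_one]
  add_mem' := by
    intro a b ha hb
    show (0 : WithTop ℚ) ≤ S.vK (a + b)
    unfold vK
    rw [map_add]
    exact le_trans (le_min ha hb) (S.v_min_le_add _ _)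
  mul_mem' := by
    intro a b ha hb
    show (0 : WithTop ℚ) ≤ S.vK (a * b)
    unfold vK
    rw [map_mul, S.v_mul]
    exact add_nonneg ha hb
  neg_mem' := by
    intro a ha
    show (0 : WithTop ℚ) ≤ S.vK (-a)
    unfold vK
    rw [map_neg, S.v_neg]
    exact ha

/-- The maximal ideal `𝔪` of the ring of integers of `K`. -/
def maximalIdeal (S : OkutsuSetup K) : Ideal S.integers where
  carrier := {x : S.integers | 0 < S.vK (x : K)}
  zero_mem' := by
    show (0 : WithTop ℚ) < S.vK ((0 : S.integers) : K)
    have h0 : ((0 : S.integers) : K) = (0 : K) := rfl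
    rw [h0]
    unfold vK
    rw [map_zero, (S.v_eq_top_iff 0).mpr rfl]
    exact WithTop.coe_lt_top 0
  add_mem' := by
    intro a b ha hb
    show (0 : WithTop ℚ) < S.vK ((a : K) + (b : K))
    refine lt_of_lt_of_le (lt_min ha hb) ?_
    unfold vK
    rw [map_add]
    exact S.v_min_le_add _ _
  smul_mem' := by
    intro c x hx
    show (0 : WithTop ℚ) < S.vK ((c : K) * (x : K))
    unfold vK
    rw [map_mul, S.v_mul]
    calc (0 : WithTop ℚ) < S.v (algebraMap K (AlgebraicClosure K) (x : K)) := hx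
    _ ≤ _ + _ := le_add_of_nonneg_left c.2

/-- The residue field `𝓞/𝔪` of `K`. -/
abbrev Residue (S : OkutsuSetup K) : Type :=
  S.integers ⧸ S.maximalIdeal

/-- The residue characteristic of `K`. -/
def resChar (S : OkutsuSetup K) : ℕ :=
  ringChar S.Residue

/-- Reduction of a polynomial with integer coefficients modulo `𝔪`. -/
def reduce (S : OkutsuSetup K) (F : Polynomial S.integers) : Polynomial S.Residue :=
  F.map (Ideal.Quotient.mk S.maximalIdeal)

/-- Evaluation of a polynomial with coefficients in `𝓞` at a point of the algebraic
closure of `K`. -/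
def evalK (S : OkutsuSetup K) (F : Polynomial S.integers) (θ : AlgebraicClosure K) :
    AlgebraicClosure K :=
  Polynomial.aeval θ (F.map S.integers.subtype)

/-- `v(g)` for a polynomial `g`: the minimum of the valuations of its coefficients. -/
def vPoly (S : OkutsuSetup K) (g : Polynomial S.integers) : WithTop ℚ :=
  (Finset.range (g.natDegree + 1)).inf fun i => S.vK ((g.coeff i : K))

/-- The ramification index `e(E/K)` of a finite subextension `E` of `K̄/K`: the least
positive integer `e` such that all values of `v` on `E*` lie in `(1/e)ℤ`. -/
def ramIdx (S : OkutsuSetup K) (E : IntermediateField K (AlgebraicClosure K)) : ℕ :=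
  sInf {e : ℕ | 0 < e ∧ ∀ x ∈ E, x ≠ (0 : AlgebraicClosure K) →
    ∃ k : ℤ, S.v x = (((k : ℚ) / (e : ℚ) : ℚ) : WithTop ℚ)}

/-- The residual degree `f(E/K)` of a finite subextension `E` of `K̄/K`; since `K` is a
complete discretely valued field, `[E : K] = e(E/K)·f(E/K)`. -/
def resDeg (S : OkutsuSetup K) (E : IntermediateField K (AlgebraicClosure K)) : ℕ :=
  Module.finrank K E / S.ramIdx E

/-- A subextension `E/K` is tamely ramified when its ramification index is prime to the
residue characteristic of `K`. -/
def IsTame (S : OkutsuSetup K) (E : IntermediateField K (AlgebraicClosure K)) : Prop :=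
  Nat.Coprime (S.ramIdx E) S.resChar

/-- The Okutsu invariants `m_0 = 1 ≤ m_1 < ⋯ < m_r < m_{r+1} = n` and
`μ_0 = 0 < μ_1 < ⋯ < μ_r < μ_{r+1} = ∞` of a monic irreducible polynomial of degree `n`
with root `θ`:  `m i` is the least `[K(η):K]` over `η` with `v(θ-η) > μ (i-1)`, and
`μ i` is the greatest value of `v(θ-η)` over `η` with `[K(η):K] = m i`.
`r` is the depth: the number of indices `i ≥ 1` with `m i < n`. -/
structure OkutsuData (S : OkutsuSetup K) (θ : AlgebraicClosure K) (n : ℕ) : Type where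
  r : ℕ
  m : ℕ → ℕ
  μ : ℕ → WithTop ℚ
  m_zero : m 0 = 1
  mu_zero : μ 0 = 0
  m_isLeast : ∀ i, 1 ≤ i → i ≤ r + 1 →
    IsLeast {d : ℕ | ∃ η : AlgebraicClosure K,
      (minpoly K η).natDegree = d ∧ μ (i - 1) < S.v (θ - η)} (m i)
  mu_isGreatest : ∀ i, 1 ≤ i → i ≤ r + 1 →
    IsGreatest {c : WithTop ℚ | ∃ η : AlgebraicClosure K,
      (minpoly K η).natDegree = m i ∧ S.v (θ - η) = c} (μ i)
  m_lt_n : ∀ i, 1 ≤ i → i ≤ r → m i < n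
  m_last : m (r + 1) = n

/-- `[F_1, …, F_r]` is an Okutsu frame of the monic irreducible polynomial with root `θ`
and Okutsu invariants `D`: for each `1 ≤ i ≤ r`, `F_i` is the minimal polynomial of some
`α_i ∈ K̄` with `[K(α_i):K] = m_i` and `v(θ - α_i) = μ_i`. -/
def IsFrame (S : OkutsuSetup K) {θ : AlgebraicClosure K} {n : ℕ} (D : OkutsuData S θ n)
    (Fr : ℕ → Polynomial S.integers) : Prop :=
  ∀ i, 1 ≤ i → i ≤ D.r → ∃ α : AlgebraicClosure K,
    (minpoly K α).natDegree = D.m i ∧ S.v (θ - α) = D.μ i ∧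
      (Fr i).map S.integers.subtype = minpoly K α

/-- `φ` is a Montes approximation to the monic irreducible polynomial `F`:  a monic
irreducible polynomial of the same degree `n` having a root `α` with `v(θ - α) > μ_r`,
where `θ` is a root of `F`. -/
def IsMontesApprox (S : OkutsuSetup K) (F φ : Polynomial S.integers) : Prop :=
  φ.Monic ∧ Irreducible (φ.map S.integers.subtype) ∧ φ.natDegree = F.natDegree ∧
    ∃ θ : AlgebraicClosure K, S.evalK F θ = 0 ∧
      ∃ D : OkutsuData S θ F.natDegree, ∃ α : AlgebraicClosure K,
        S.evalK φ α = 0 ∧ D.μ D.r < S.v (θ - α)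

end OkutsuSetup

open OkutsuSetup in
/-- Let `F ∈ 𝓞[x]` be monic irreducible with root `θ`, of depth `r`,
with Okutsu frame `[F_1, …, F_r]` and invariants `m_i`, `μ_i`.  Fix `1 ≤ i ≤ r + 1` and
let `α ∈ K̄` be an algebraic integer with `[K(α):K] = m_i` and `v(θ - α) > μ_{i-1}`, with
minimal polynomial `G`.  Then `[F_1, …, F_{i-1}]` is an Okutsu frame of `G`. -/
theorem okutsu_stmt_3 {K : Type} [Field K] [CharZero K] (S : OkutsuSetup K)
    (F : Polynomial S.integers) (hFmonic : F.Monic)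
    (hFirr : Irreducible (F.map S.integers.subtype))
    (n : ℕ) (hFdeg : F.natDegree = n)
    (θ : AlgebraicClosure K) (hθ : S.evalK F θ = 0)
    (D : OkutsuData S θ n)
    (Fr : ℕ → Polynomial S.integers) (hFr : S.IsFrame D Fr)
    (i : ℕ) (hi1 : 1 ≤ i) (hi2 : i ≤ D.r + 1)
    (α : AlgebraicClosure K) (hαint : 0 ≤ S.v α)
    (hαdeg : (minpoly K α).natDegree = D.m i)
    (hαv : D.μ (i - 1) < S.v (θ - α)) :
    ∃ D' : OkutsuData S α (D.m i), D'.r + 1 = i ∧ S.IsFrame D' Fr := by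
  -- basic ultrametric facts
  have vcomm : ∀ a b : AlgebraicClosure K, S.v (a - b) = S.v (b - a) := by
    intro a b
    have h : a - b = -(b - a) := by ring
    rw [h, S.v_neg]
  have tri : ∀ a b c : AlgebraicClosure K,
      min (S.v (a - b)) (S.v (b - c)) ≤ S.v (a - c) := by
    intro a b c
    have h : a - c = (a - b) + (b - c) := by ring
    rw [h]; exact S.v_min_le_add _ _
  -- if v(θ-η) < v(θ-α) then v(α-η) = v(θ-η)
  have key : ∀ η : AlgebraicClosure K, S.v (θ - η) < S.v (θ - α) →
      S.v (α - η) = S.v (θ - η) := by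
    intro η h
    have h1 : S.v (θ - η) ≤ S.v (α - η) := by
      have := tri α θ η
      rw [vcomm α θ] at this
      exact le_trans (le_min h.le le_rfl) this
    have h2 : S.v (α - η) ≤ S.v (θ - η) := by
      by_contra hc
      push_neg at hc
      have hmin : S.v (θ - η) < min (S.v (θ - α)) (S.v (α - η)) := lt_min h hc
      exact absurd (tri θ α η) (not_le.mpr hmin)
    exact le_antisymm h2 h1
  -- strict monotonicity of μ
  have mu_succ : ∀ j, 1 ≤ j → j ≤ D.r + 1 → D.μ (j - 1) < D.μ j := by
    intro j hj1 hj2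
    obtain ⟨⟨η, hdeg, hv⟩, _⟩ := D.m_isLeast j hj1 hj2
    obtain ⟨_, hub⟩ := D.mu_isGreatest j hj1 hj2
    exact lt_of_lt_of_le hv (hub ⟨η, hdeg, rfl⟩)
  have mu_mono : ∀ a b, a ≤ b → b ≤ D.r + 1 → D.μ a ≤ D.μ b := by
    intro a b hab hb
    induction b with
    | zero => simp_all
    | succ k ih =>
      rcases Nat.eq_or_lt_of_le hab with h | h
      · rw [h]
      · have h1 : D.μ a ≤ D.μ k := ih (by omega) (by omega)
        have h2 : D.μ k < D.μ (k + 1) := by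
          have := mu_succ (k + 1) (by omega) hb
          simpa using this
        exact le_trans h1 h2.le
  -- strict monotonicity of m
  have m_succ : ∀ j, 1 ≤ j → j + 1 ≤ D.r + 1 → D.m j < D.m (j + 1) := by
    intro j hj1 hj2
    obtain ⟨⟨η, hdeg, hv⟩, _⟩ := D.m_isLeast (j + 1) (by omega) hj2
    have hv' : D.μ j < S.v (θ - η) := by simpa using hv
    have hle : D.m j ≤ D.m (j + 1) := by
      refine (D.m_isLeast j hj1 (by omega)).2 ⟨η, hdeg, ?_⟩
      exact lt_trans (mu_succ j hj1 (by omega)) hv'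
    rcases lt_or_eq_of_le hle with h | h
    · exact h
    · exfalso
      have hub := (D.mu_isGreatest j hj1 (by omega)).2 ⟨η, by rw [hdeg, ← h], rfl⟩
      exact absurd hv' (not_lt.mpr hub)
  have m_mono : ∀ a b, 1 ≤ a → a < b → b ≤ D.r + 1 → D.m a < D.m b := by
    intro a b ha hab hb
    induction b with
    | zero => omega
    | succ k ih =>
      rcases Nat.lt_or_ge a k with h | h
      · exact lt_trans (ih h (by omega)) (m_succ k (by omega) hb)
      · have : a = k := by omega
        rw [this]; exact m_succ k (by omega) hb
  have hir : i - 1 ≤ D.r := by omega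
  have hθα : ∀ j, j ≤ i - 1 → D.μ j < S.v (θ - α) := by
    intro j hj
    exact lt_of_le_of_lt (mu_mono j (i - 1) hj (by omega)) hαv
  refine ⟨⟨i - 1, D.m, fun j => if j < i then D.μ j else ⊤, D.m_zero, ?_, ?_, ?_, ?_, ?_⟩,
    by show i - 1 + 1 = i; omega, ?_⟩
  · show (if 0 < i then D.μ 0 else ⊤) = 0
    rw [if_pos (by omega), D.mu_zero]
  · -- m_isLeast
    intro j hj1 hj2
    have hji : j ≤ i := by omega
    have hcond : (if j - 1 < i then D.μ (j - 1) else ⊤) = D.μ (j - 1) := if_pos (by omega)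
    have hθαj : D.μ (j - 1) < S.v (θ - α) := hθα (j - 1) (by omega)
    constructor
    · show ∃ η, (minpoly K η).natDegree = D.m j ∧
        (if j - 1 < i then D.μ (j - 1) else ⊤) < S.v (α - η)
      rw [hcond]
      rcases Nat.lt_or_ge j i with hlt | hge
      · obtain ⟨⟨η, hdeg, hveq⟩, _⟩ := D.mu_isGreatest j hj1 (by omega)
        refine ⟨η, hdeg, ?_⟩
        rw [key η (by rw [hveq]; exact hθα j (by omega))]
        rw [hveq]
        exact mu_succ j hj1 (by omega)
      · have hji' : j = i := by omega
        refine ⟨α, by rw [hαdeg, hji'], ?_⟩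
        have : S.v (α - α) = ⊤ := (S.v_eq_top_iff _).mpr (by ring)
        rw [this]
        exact lt_of_lt_of_le hθαj le_top
    · intro d hd
      obtain ⟨η, hdeg, hv⟩ := hd
      simp only [hcond] at hv
      have hv' : D.μ (j - 1) < S.v (θ - η) :=
        lt_of_lt_of_le (lt_min hθαj hv) (tri θ α η)
      exact (D.m_isLeast j hj1 (by omega)).2 ⟨η, hdeg, hv'⟩
  · -- mu_isGreatest
    intro j hj1 hj2
    rcases Nat.lt_or_ge j i with hlt | hge
    · have hji : j ≤ i - 1 := by omega
      have hcond : (if j < i then D.μ j else ⊤) = D.μ j := if_pos hlt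
      have hμlt : D.μ j < S.v (θ - α) := hθα j hji
      rw [show (if j < i then D.μ j else ⊤) = D.μ j from hcond]
      constructor
      · obtain ⟨⟨η, hdeg, hveq⟩, _⟩ := D.mu_isGreatest j hj1 (by omega)
        exact ⟨η, hdeg, by rw [key η (by rw [hveq]; exact hμlt), hveq]⟩
      · intro c hc
        obtain ⟨η, hdeg, hceq⟩ := hc
        by_contra hcgt
        push_neg at hcgt
        have hv' : D.μ j < S.v (θ - η) :=
          lt_of_lt_of_le (lt_min hμlt (hceq ▸ hcgt)) (tri θ α η)
        have hub := (D.mu_isGreatest j hj1 (by omega)).2 ⟨η, hdeg, rfl⟩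
        exact absurd hv' (not_lt.mpr hub)
    · have hji : j = i := by omega
      rw [show (if j < i then D.μ j else ⊤) = ⊤ from if_neg (by omega)]
      constructor
      · exact ⟨α, by rw [hαdeg, hji], (S.v_eq_top_iff _).mpr (by ring)⟩
      · intro c _; exact le_top
  · -- m_lt_n
    intro j hj1 hj2
    exact m_mono j i hj1 (by omega) hi2
  · -- m_last
    show D.m (i - 1 + 1) = D.m i
    congr 1; omega
  · -- frame
    intro j hj1 hj2
    have hj2' : j ≤ i - 1 := hj2
    obtain ⟨β, hdeg, hveq, hFrj⟩ := hFr j hj1 (by omega)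
    refine ⟨β, hdeg, ?_, hFrj⟩
    show S.v (α - β) = if j < i then D.μ j else ⊤
    rw [if_pos (by omega), key β (by rw [hveq]; exact hθα j (by omega)), hveq]
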